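/- Suppose q has finite multiplicative order k with 1 ≤ k ≤ n. Then the single-row partition (k) (a row of k boxes, regarded as a one-component piece of a multipartition) is not a Kleshchev multipartition: its unique removable node is not normal, hence not good, for any parameters u. -/

import Mathlib

/-- A partition function: weakly decreasing row lengths. -/
def IsPartitionFun (lam : ℕ → ℕ) : Prop := ∀ i, lam (i + 1) ≤ lam i

/-- `lam` is a partition of `n`. -/
def IsPartitionOf (lam : ℕ → ℕ) (n : ℕ) : Prop :=
  IsPartitionFun lam ∧ (Function.support lam).Finite ∧ ∑ᶠ i, lam i = n

/-- Residue of the node in (0-based) row `i`, column `j`: `u * q ^ (j - i)`. -/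
noncomputable def resid (u q : ℂ) (i j : ℕ) : ℂ := u * q ^ ((j : ℤ) - (i : ℤ))

/-- Multiplicity of `z` in the multiset of residues (the content) of `lam`. -/
noncomputable def contCount (lam : ℕ → ℕ) (u q z : ℂ) : ℕ :=
  Set.ncard {p : ℕ × ℕ | p.2 < lam p.1 ∧ resid u q p.1 p.2 = z}

/-- The multiplicative order of `q` is at least `N` (or infinite). -/
def OrderAtLeast (q : ℂ) (N : ℕ) : Prop := ∀ k : ℕ, 0 < k → k < N → q ^ k ≠ 1

/-- The node at the end of row `x.2` of component `x.1` is removable. -/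
def IsRemovable {m : ℕ} (lam : Fin m → ℕ → ℕ) (x : Fin m × ℕ) : Prop :=
  0 < lam x.1 x.2 ∧ lam x.1 (x.2 + 1) < lam x.1 x.2

/-- Residue of the removable node at the end of row `x.2` of component `x.1`. -/
noncomputable def remRes {m : ℕ} (lam : Fin m → ℕ → ℕ) (u : Fin m → ℂ) (q : ℂ)
    (x : Fin m × ℕ) : ℂ := resid (u x.1) q x.2 (lam x.1 x.2 - 1)

/-- A node can be added at the end of row `x.2` of component `x.1`. -/
def IsAddable {m : ℕ} (lam : Fin m → ℕ → ℕ) (x : Fin m × ℕ) : Prop :=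
  x.2 = 0 ∨ lam x.1 x.2 < lam x.1 (x.2 - 1)

/-- Residue of the addable node at the end of row `x.2` of component `x.1`. -/
noncomputable def addRes {m : ℕ} (lam : Fin m → ℕ → ℕ) (u : Fin m → ℂ) (q : ℂ)
    (x : Fin m × ℕ) : ℂ := resid (u x.1) q x.2 (lam x.1 x.2)

/-- `y` is below `x`: later component, or same component and lower row. -/
def NodeBelow {m : ℕ} (x y : Fin m × ℕ) : Prop :=
  x.1 < y.1 ∨ (x.1 = y.1 ∧ x.2 < y.2)

/-- A removable node `x` of residue `a` is normal if for every addable `a`-node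
`y` below it, there are more removable `a`-nodes between `x` and `y` than
addable `a`-nodes. -/
noncomputable def IsNormal {m : ℕ} (lam : Fin m → ℕ → ℕ) (u : Fin m → ℂ) (q : ℂ)
    (a : ℂ) (x : Fin m × ℕ) : Prop :=
  IsRemovable lam x ∧ remRes lam u q x = a ∧
  ∀ y, IsAddable lam y → addRes lam u q y = a → NodeBelow x y →
    Set.ncard {z | IsRemovable lam z ∧ remRes lam u q z = a ∧ NodeBelow x z ∧ NodeBelow z y} >
    Set.ncard {z | IsAddable lam z ∧ addRes lam u q z = a ∧ NodeBelow x z ∧ NodeBelow z y}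

/-- A good `a`-node is the highest normal `a`-node. -/
noncomputable def IsGood {m : ℕ} (lam : Fin m → ℕ → ℕ) (u : Fin m → ℂ) (q : ℂ)
    (a : ℂ) (x : Fin m × ℕ) : Prop :=
  IsNormal lam u q a x ∧ ∀ y, IsNormal lam u q a y → y = x ∨ NodeBelow x y

/-- Remove the (removable) node at the end of row `x.2` of component `x.1`. -/
def removeNode {m : ℕ} (lam : Fin m → ℕ → ℕ) (x : Fin m × ℕ) : Fin m → ℕ → ℕ :=
  fun t r => if t = x.1 ∧ r = x.2 then lam t r - 1 else lam t r

/-- Kleshchev multipartitions: the empty one is Kleshchev, and `lam` is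
Kleshchev iff it becomes Kleshchev after removing some good node. -/
inductive Kleshchev {m : ℕ} (u : Fin m → ℂ) (q : ℂ) : (Fin m → ℕ → ℕ) → Prop
  | empty : Kleshchev u q (fun _ _ => 0)
  | step (lam : Fin m → ℕ → ℕ) (a : ℂ) (x : Fin m × ℕ) :
      IsGood lam u q a x → Kleshchev u q (removeNode lam x) → Kleshchev u q lam

/-- If `q` has finite multiplicative order `k` with `1 ≤ k ≤ n`, then the
single-row partition `(k)` placed in any component `s` has no normal node
(in particular its unique removable node is not normal, hence not good), so it
is not Kleshchev, for any parameters `u`. -/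
theorem stmt7 (n m k : ℕ) (q : ℂ) (u : Fin m → ℂ) (hq0 : q ≠ 0) (hq1 : q ≠ 1)
    (hu : ∀ t, u t ≠ 0) (hk1 : 1 ≤ k) (hkn : k ≤ n)
    (hqk : q ^ k = 1) (hmin : ∀ l : ℕ, 0 < l → l < k → q ^ l ≠ 1)
    (s : Fin m) :
    (∀ (a : ℂ) (x : Fin m × ℕ),
      ¬ IsNormal (fun t r => if t = s ∧ r = 0 then k else 0) u q a x) ∧
    ¬ Kleshchev u q (fun t r => if t = s ∧ r = 0 then k else 0) := by
  set L : Fin m → ℕ → ℕ := fun t r => if t = s ∧ r = 0 then k else 0 with hL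
  have key : ∀ (a : ℂ) (x : Fin m × ℕ), ¬ IsNormal L u q a x := by
    rintro a x ⟨⟨hpos, hlt⟩, hres, hnorm⟩
    have hx : x.1 = s ∧ x.2 = 0 := by
      by_contra h
      simp only [hL, if_neg h] at hpos
      exact absurd hpos (lt_irrefl 0)
    -- the addable node (s, 1)
    have hLs0 : L s 0 = k := by simp [hL]
    have hLs1 : L s 1 = 0 := by simp [hL]
    have hadd : IsAddable L (s, 1) := by
      right
      simp only [hL]
      simpa using (show 0 < k by omega)
    have hares : addRes L u q (s, 1) = a := by
      have hares' : addRes L u q (s, 1) = u s * q ^ ((0 : ℤ) - 1) := by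
        simp [addRes, resid, hLs1]
      have hres' : a = u s * q ^ (((k - 1 : ℕ) : ℤ) - (0 : ℤ)) := by
        rw [← hres]
        simp [remRes, resid, hx.1, hx.2, hLs0]
      have hcast : ((k - 1 : ℕ) : ℤ) = (k : ℤ) - 1 := by
        omega
      have hzk : q ^ ((k : ℤ)) = 1 := by
        rw [zpow_natCast, hqk]
      have hpow : q ^ ((0 : ℤ) - 1) = q ^ ((k : ℤ) - 1) := by
        rw [zpow_sub₀ hq0, zpow_sub₀ hq0, hzk, zpow_zero]
      rw [hares', hres', hcast, sub_zero, hpow]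
    have hbelow : NodeBelow x (s, 1) := by
      right
      exact ⟨hx.1, by rw [hx.2]; exact Nat.zero_lt_one⟩
    have hgt := hnorm (s, 1) hadd hares hbelow
    have hempty : {z | IsRemovable L z ∧ remRes L u q z = a ∧ NodeBelow x z ∧
        NodeBelow z (s, 1)} = ∅ := by
      ext z
      simp only [Set.mem_setOf_eq, Set.mem_empty_iff_false, iff_false]
      rintro ⟨⟨hzpos, _⟩, _, hxz, _⟩
      have hz : z.1 = s ∧ z.2 = 0 := by
        by_contra h
        simp only [hL, if_neg h] at hzpos
        exact absurd hzpos (lt_irrefl 0)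
      rcases hxz with h1 | h2
      · rw [hx.1, hz.1] at h1; exact absurd h1 (lt_irrefl s)
      · rw [hx.2, hz.2] at h2; exact absurd h2.2 (lt_irrefl 0)
    rw [hempty] at hgt
    simp at hgt
  refine ⟨key, ?_⟩
  have gen : ∀ lam, Kleshchev u q lam → lam = L → False := by
    intro lam hK
    cases hK with
    | empty =>
        intro h
        have := congrFun (congrFun h.symm s) 0
        simp [hL] at this
        omega
    | step lam a x hgood _ =>
        intro h
        subst h
        exact key a x hgood.1
  exact fun hK => gen L hK rfl
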